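/- Let c > 0 and m ∈ ℕ. There exists a constant C = C(c, m) such that for every n > c², every probability space with a filtration (G_k)_{k=0,…,n}, and every strictly positive martingale (M_k)_{k=0,…,n} with respect to (G_k) satisfying M_0 = 1 and |M_{k+1} − M_k| ≤ (c/√n) M_k almost surely for k = 0, …, n−1, one has E[(max_{0 ≤ k ≤ n} |ln M_k|)^{2m}] ≤ C. -/

import Mathlib

open scoped BigOperators
open MeasureTheory Real Set

/-- tangent line inequality for `x ↦ x⁻¹`. -/
lemma aux_tangent_inv {x y : ℝ} (hx : 0 < x) (hy : 0 < y) :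
    2 * x⁻¹ - x⁻¹ ^ 2 * y ≤ y⁻¹ := by
  rw [← sub_nonneg]
  have h : y⁻¹ - (2 * x⁻¹ - x⁻¹ ^ 2 * y) = (x - y) ^ 2 / (x ^ 2 * y) := by
    field_simp
    ring
  rw [h]
  positivity

lemma aux_step_inv {δ x y : ℝ} (hδ0 : 0 < δ) (hδ1 : δ < 1) (hx : 0 < x)
    (h : |y - x| ≤ δ * x) :
    y⁻¹ ≤ (2 + δ ^ 2 / (1 - δ)) * x⁻¹ - x⁻¹ ^ 2 * y := by
  obtain ⟨h1, h2⟩ := abs_le.mp h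
  have h1δ : (0 : ℝ) < 1 - δ := by linarith
  have hy : 0 < y := by nlinarith
  have hcancel : δ ^ 2 / (1 - δ) * (1 - δ) = δ ^ 2 :=
    div_mul_cancel₀ _ (by linarith)
  have key : (x - y) ^ 2 ≤ δ ^ 2 / (1 - δ) * (x * y) := by
    have h3 : (x - y) ^ 2 ≤ δ ^ 2 * x ^ 2 := by nlinarith
    have h4 : δ ^ 2 * x ^ 2 ≤ δ ^ 2 / (1 - δ) * (x * y) := by
      have h5 : (1 - δ) * x ≤ y := by linarith
      have h6 : 0 ≤ δ ^ 2 / (1 - δ) := by positivity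
      nlinarith [mul_le_mul_of_nonneg_left (mul_le_mul_of_nonneg_left h5 hx.le) h6]
    linarith
  rw [← sub_nonneg]
  have hexp : (2 + δ ^ 2 / (1 - δ)) * x⁻¹ - x⁻¹ ^ 2 * y - y⁻¹ =
      (δ ^ 2 / (1 - δ) * (x * y) - (x - y) ^ 2) / (x ^ 2 * y) := by
    field_simp
    ring
  rw [hexp]
  apply div_nonneg (by linarith) (by positivity)

/-- `(log z)^(2m) ≤ (4m)^(2m) √z` for `z ≥ 1`, `m ≥ 1`. -/
lemma aux_log_pow_le {m : ℕ} (hm : 0 < m) {z : ℝ} (hz : 1 ≤ z) :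
    Real.log z ^ (2 * m) ≤ (4 * m : ℝ) ^ (2 * m) * Real.sqrt z := by
  have hz0 : (0 : ℝ) < z := lt_of_lt_of_le one_pos hz
  have hm0 : (0 : ℝ) < (4 * m : ℝ) := by positivity
  set q : ℝ := (4 * (m : ℝ))⁻¹ with hq
  have hq0 : 0 < q := by positivity
  have hlog : Real.log z ≤ 4 * (m : ℝ) * z ^ q := by
    have h1 : Real.log (z ^ q) = q * Real.log z := Real.log_rpow hz0 q
    have h2 : Real.log (z ^ q) ≤ z ^ q := by
      have := Real.log_le_sub_one_of_pos (Real.rpow_pos_of_pos hz0 q)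
      linarith
    have h3 : Real.log z = 4 * (m : ℝ) * Real.log (z ^ q) := by
      rw [h1, hq]
      field_simp
    rw [h3]
    exact mul_le_mul_of_nonneg_left h2 (by positivity)
  have hlognn : 0 ≤ Real.log z := Real.log_nonneg hz
  have hpow : Real.log z ^ (2 * m) ≤ (4 * (m : ℝ) * z ^ q) ^ (2 * m) :=
    pow_le_pow_left₀ hlognn hlog _
  refine hpow.trans_eq ?_
  rw [mul_pow]
  congr 1
  rw [← Real.rpow_natCast (z ^ q) (2 * m), ← Real.rpow_mul hz0.le]
  rw [Real.sqrt_eq_rpow]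
  congr 1
  have hmne : (m : ℝ) ≠ 0 := by positivity
  rw [hq]
  push_cast
  field_simp
  ring

/-- pointwise bound: `|log x|^(2m) ≤ (4m)^(2m) (√x + √x⁻¹)` for `x > 0`. -/
lemma aux_abs_log_pow_le (m : ℕ) {x : ℝ} (hx : 0 < x) :
    |Real.log x| ^ (2 * m) ≤ (4 * m : ℝ) ^ (2 * m) * (Real.sqrt x + Real.sqrt x⁻¹) := by
  rcases Nat.eq_zero_or_pos m with hm | hm
  · subst hm
    simp only [Nat.mul_zero, pow_zero, mul_comm]
    rcases le_total 1 x with h | h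
    · have : (1 : ℝ) ≤ Real.sqrt x := Real.one_le_sqrt.mpr h
      nlinarith [Real.sqrt_nonneg x⁻¹]
    · have hx1 : (1 : ℝ) ≤ x⁻¹ := (one_le_inv_iff₀.mpr ⟨hx, h⟩) -- maybe wrong name
      have : (1 : ℝ) ≤ Real.sqrt x⁻¹ := Real.one_le_sqrt.mpr hx1
      nlinarith [Real.sqrt_nonneg x]
  · rcases le_total 1 x with h | h
    · have h1 : |Real.log x| = Real.log x := abs_of_nonneg (Real.log_nonneg h)
      rw [h1]
      refine (aux_log_pow_le hm h).trans ?_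
      have : (0:ℝ) ≤ (4 * m : ℝ) ^ (2 * m) := by positivity
      nlinarith [Real.sqrt_nonneg x⁻¹]
    · have hx1 : (1 : ℝ) ≤ x⁻¹ := (one_le_inv_iff₀.mpr ⟨hx, h⟩)
      have h1 : |Real.log x| = Real.log x⁻¹ := by
        rw [Real.log_inv, abs_of_nonpos (Real.log_nonpos hx.le h)]
      rw [h1]
      refine (aux_log_pow_le hm hx1).trans ?_
      have : (0:ℝ) ≤ (4 * m : ℝ) ^ (2 * m) := by positivity
      nlinarith [Real.sqrt_nonneg x]

/-- If `μ{t ≤ X} ≤ K/t` for all `t > 0`, then `∫ √X ≤ 2√K`. -/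
lemma aux_tail_lintegral {Ω : Type} [MeasurableSpace Ω] (μ : Measure Ω)
    [IsProbabilityMeasure μ] {X : Ω → ℝ} (hX : AEMeasurable X μ) {K : ℝ} (hK : 1 ≤ K)
    (htail : ∀ t : ℝ, 0 < t → μ {ω | t ≤ X ω} ≤ ENNReal.ofReal (K / t)) :
    ∫⁻ ω, ENNReal.ofReal (Real.sqrt (X ω)) ∂μ ≤ ENNReal.ofReal (2 * Real.sqrt K) := by
  have hK0 : (0 : ℝ) < K := lt_of_lt_of_le one_pos hK
  set b : ℝ := Real.sqrt K with hb
  have hb0 : 0 < b := Real.sqrt_pos.mpr hK0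
  have hlc : ∫⁻ ω, ENNReal.ofReal (Real.sqrt (X ω)) ∂μ
      = ∫⁻ t in Ioi (0:ℝ), μ {a | t < Real.sqrt (X a)} := by
    exact lintegral_eq_lintegral_meas_lt μ
      (Filter.Eventually.of_forall fun ω => Real.sqrt_nonneg _)
      (Real.continuous_sqrt.measurable.comp_aemeasurable hX)
  rw [hlc]
  have hsplit : (Ioi (0:ℝ)) = Ioc (0:ℝ) b ∪ Ioi b := (Ioc_union_Ioi_eq_Ioi hb0.le).symm
  rw [hsplit, lintegral_union measurableSet_Ioi (Ioc_disjoint_Ioi le_rfl)]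
  have h1 : ∫⁻ t in Ioc (0:ℝ) b, μ {a | t < Real.sqrt (X a)} ≤ ENNReal.ofReal b := by
    calc ∫⁻ t in Ioc (0:ℝ) b, μ {a | t < Real.sqrt (X a)}
        ≤ ∫⁻ _ in Ioc (0:ℝ) b, 1 := lintegral_mono fun t => prob_le_one
      _ = ENNReal.ofReal b := by
          rw [setLIntegral_one, Real.volume_Ioc, sub_zero]
  have h2 : ∫⁻ t in Ioi b, μ {a | t < Real.sqrt (X a)} ≤ ENNReal.ofReal b := by
    have hmono : ∀ t ∈ Ioi b, μ {a | t < Real.sqrt (X a)}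
        ≤ ENNReal.ofReal (K * t ^ (-2 : ℝ)) := by
      intro t ht
      have ht0 : 0 < t := hb0.trans ht
      have hsub : {a | t < Real.sqrt (X a)} ⊆ {a | t ^ 2 ≤ X a} := by
        intro a ha
        have ha' : t < Real.sqrt (X a) := ha
        exact le_of_lt ((Real.lt_sqrt ht0.le).mp ha')
      refine (measure_mono hsub).trans ((htail (t ^ 2) (by positivity)).trans ?_)
      rw [Real.rpow_neg ht0.le]
      rw [show ((2:ℝ)) = ((2:ℕ):ℝ) by norm_num, Real.rpow_natCast]
      rw [div_eq_mul_inv]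
    calc ∫⁻ t in Ioi b, μ {a | t < Real.sqrt (X a)}
        ≤ ∫⁻ t in Ioi b, ENNReal.ofReal (K * t ^ (-2 : ℝ)) :=
          setLIntegral_mono' measurableSet_Ioi hmono
      _ = ENNReal.ofReal (∫ t in Ioi b, K * t ^ (-2 : ℝ)) := by
          rw [← ofReal_integral_eq_lintegral_ofReal]
          · exact (integrableOn_Ioi_rpow_of_lt (by norm_num) hb0).const_mul K
          · filter_upwards [ae_restrict_mem measurableSet_Ioi] with t ht
            have : 0 < t := hb0.trans ht
            positivity
      _ = ENNReal.ofReal b := by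
          rw [integral_const_mul, integral_Ioi_rpow_of_lt (by norm_num) hb0]
          congr 1
          rw [show (-2:ℝ)+1 = -1 by norm_num, Real.rpow_neg_one]
          have hss : Real.sqrt K * Real.sqrt K = K := Real.mul_self_sqrt hK0.le
          rw [hb]
          field_simp
          rw [Real.sq_sqrt hK0.le]
  calc _ ≤ ENNReal.ofReal b + ENNReal.ofReal b := add_le_add h1 h2
    _ = ENNReal.ofReal (2 * b) := by rw [← ENNReal.ofReal_add hb0.le hb0.le]; ring_nf

lemma aux_doob_tail {Ω : Type} {m0 : MeasurableSpace Ω} {μ : Measure Ω}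
    [IsProbabilityMeasure μ] {ℱ : Filtration ℕ m0} {f : ℕ → Ω → ℝ}
    (hsub : Submartingale f ℱ μ) (hpos : 0 ≤ f) (n : ℕ) {K : ℝ}
    (hK : ∫ ω, f n ω ∂μ ≤ K) {t : ℝ} (ht : 0 < t) :
    μ {ω | t ≤ (Finset.range (n + 1)).sup' Finset.nonempty_range_add_one fun k => f k ω}
      ≤ ENNReal.ofReal (K / t) := by
  set S := {ω | t ≤ (Finset.range (n + 1)).sup' Finset.nonempty_range_add_one fun k => f k ω}
  have h := maximal_ineq hsub hpos (ε := t.toNNReal) n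
  have hset : {ω | ((t.toNNReal : ℝ)) ≤ (Finset.range (n + 1)).sup'
      Finset.nonempty_range_add_one fun k => f k ω} = S := by
    simp [S, Real.coe_toNNReal t ht.le]
  rw [hset] at h
  have hint : ∫ ω in S, f n ω ∂μ ≤ K := by
    refine le_trans ?_ hK
    exact setIntegral_le_integral (hsub.integrable n)
      (Filter.Eventually.of_forall fun ω => hpos n ω)
  have h2 : ENNReal.ofReal t * μ S ≤ ENNReal.ofReal K := by
    refine le_trans ?_ ((h.trans (ENNReal.ofReal_le_ofReal hint)))
    exact le_rfl
  rw [ENNReal.ofReal_div_of_pos ht]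
  rw [ENNReal.le_div_iff_mul_le (Or.inl (by simp [ENNReal.ofReal_eq_zero, not_le, ht]))
    (Or.inl ENNReal.ofReal_ne_top)]
  rw [mul_comm]
  exact h2

/-- a uniform moment bound for the running maximum of `|ln M_k|`
for strictly positive discrete-time martingales with relative step size `c/√n`
(cf. (4.24)–(4.26) in Kusuoka). -/
theorem martingale_log_max_moment_bound (c : ℝ) (hc : 0 < c) (m : ℕ) :
    ∃ C : ℝ, ∀ n : ℕ, c ^ 2 < (n : ℝ) →
      ∀ (Ω : Type) (m0 : MeasurableSpace Ω) (μ : Measure Ω),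
        IsProbabilityMeasure μ →
        ∀ G : ℕ → MeasurableSpace Ω, (∀ k, G k ≤ m0) → Monotone G →
        ∀ M : ℕ → Ω → ℝ,
          (∀ k ≤ n, StronglyMeasurable[G k] (M k)) →
          (∀ k ≤ n, Integrable (M k) μ) →
          (∀ k < n, μ[M (k + 1) | G k] =ᵐ[μ] M k) →
          (∀ᵐ ω ∂μ, M 0 ω = 1) →
          (∀ k ≤ n, ∀ᵐ ω ∂μ, 0 < M k ω) →
          (∀ k < n, ∀ᵐ ω ∂μ, |M (k + 1) ω - M k ω| ≤ c / Real.sqrt n * M k ω) →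
          ∫⁻ ω, ENNReal.ofReal
              (((Finset.range (n + 1)).sup' Finset.nonempty_range_add_one
                  fun k => |Real.log (M k ω)|) ^ (2 * m)) ∂μ
            ≤ ENNReal.ofReal C := by
  classical
  set A : ℝ := (4 * m : ℝ) ^ (2 * m) with hA
  have hA0 : (0:ℝ) ≤ A := by positivity
  set n₀ : ℕ := Nat.floor (c ^ 2) + 1 with hn₀
  have hn₀pos : (0:ℝ) < (n₀ : ℝ) := by positivity
  set ρ : ℝ := c / Real.sqrt n₀ with hρ
  have hρ1 : ρ < 1 := by
    rw [hρ, div_lt_one (Real.sqrt_pos.mpr hn₀pos)]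
    refine (Real.lt_sqrt hc.le).mpr ?_
    rw [hn₀]
    push_cast
    exact Nat.lt_floor_add_one (c ^ 2)
  set K₀ : ℝ := max 1 (Real.exp (c ^ 2 / (1 - ρ))) with hK₀
  have hK₀1 : (1:ℝ) ≤ K₀ := le_max_left _ _
  refine ⟨A * (2 + 2 * Real.sqrt K₀), ?_⟩
  intro n hn Ω m0 μ hμ G hGle hGmono M hSM hMint hmart hM0 hMpos hstep
  have hnR : (0:ℝ) < (n:ℝ) := lt_trans (by positivity) hn
  have hnn0 : n₀ ≤ n := by
    have h1 : ((Nat.floor (c ^ 2) : ℕ) : ℝ) ≤ c ^ 2 := Nat.floor_le (by positivity)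
    have h2 : ((Nat.floor (c ^ 2) : ℕ) : ℝ) < (n : ℝ) := lt_of_le_of_lt h1 hn
    have h3 : Nat.floor (c ^ 2) < n := by exact_mod_cast h2
    omega
  set δ : ℝ := c / Real.sqrt n with hδ
  have hsn : 0 < Real.sqrt n := Real.sqrt_pos.mpr hnR
  have hδ0 : 0 < δ := div_pos hc hsn
  have hδρ : δ ≤ ρ := by
    have h4 : Real.sqrt n₀ ≤ Real.sqrt n := Real.sqrt_le_sqrt (by exact_mod_cast hnn0)
    have h5 : 0 < Real.sqrt n₀ := Real.sqrt_pos.mpr hn₀pos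
    rw [hδ, hρ, div_le_div_iff₀ hsn h5]
    nlinarith
  have hδ1 : δ < 1 := lt_of_le_of_lt hδρ hρ1
  have h1δ : (0:ℝ) < 1 - δ := by linarith
  have h1ρ : (0:ℝ) < 1 - ρ := by linarith
  -- the good event
  have hGood : ∀ᵐ ω ∂μ, M 0 ω = 1 ∧ (∀ k, k ≤ n → 0 < M k ω) ∧
      (∀ k, k < n → |M (k + 1) ω - M k ω| ≤ δ * M k ω) := by
    refine hM0.and (Filter.Eventually.and ?_ ?_)
    · rw [MeasureTheory.ae_all_iff]
      intro k
      by_cases hk : k ≤ n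
      · exact (hMpos k hk).mono fun ω h _ => h
      · exact Filter.Eventually.of_forall fun ω h => absurd h hk
    · rw [MeasureTheory.ae_all_iff]
      intro k
      by_cases hk : k < n
      · exact (hstep k hk).mono fun ω h _ => h
      · exact Filter.Eventually.of_forall fun ω h => absurd h hk
  -- lower bound on the good event
  have hlow : ∀ ω, (M 0 ω = 1 ∧ (∀ k, k ≤ n → 0 < M k ω) ∧
      (∀ k, k < n → |M (k + 1) ω - M k ω| ≤ δ * M k ω)) →
      ∀ k, k ≤ n → (1 - δ) ^ k ≤ M k ω := by
    rintro ω ⟨h0, hpos, hst⟩ k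
    induction k with
    | zero => intro _; simp [h0]
    | succ k ih =>
      intro hk
      have hk' : k ≤ n := Nat.le_of_succ_le hk
      have hkn : k < n := hk
      have h2 := (abs_le.mp (hst k hkn)).1
      have h3 := ih hk'
      calc (1 - δ) ^ (k + 1) = (1 - δ) * (1 - δ) ^ k := by ring
        _ ≤ (1 - δ) * M k ω := mul_le_mul_of_nonneg_left h3 h1δ.le
        _ ≤ M (k + 1) ω := by nlinarith [hpos k hk']
  set P : ℕ → Ω → ℝ := fun k ω => max (M (min k n) ω) ((1 - δ) ^ (min k n)) with hPdef
  have hPeqGood : ∀ ω, (M 0 ω = 1 ∧ (∀ k, k ≤ n → 0 < M k ω) ∧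
      (∀ k, k < n → |M (k + 1) ω - M k ω| ≤ δ * M k ω)) →
      ∀ k, k ≤ n → P k ω = M k ω := by
    intro ω hG k hk
    simp only [hPdef]
    rw [min_eq_left hk]
    exact max_eq_left (hlow ω hG k hk)
  have hPM : ∀ k, k ≤ n → P k =ᵐ[μ] M k := by
    intro k hk
    filter_upwards [hGood] with ω hG
    exact hPeqGood ω hG k hk
  have hPpos : ∀ k ω, 0 < P k ω := fun k ω =>
    lt_of_lt_of_le (pow_pos h1δ _) (le_max_right _ _)
  have hPlowB : ∀ k ω, (1 - δ) ^ n ≤ P k ω := fun k ω =>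
    le_trans (pow_le_pow_of_le_one (by linarith) (by linarith) (min_le_right k n)) (le_max_right _ _)
  set B : ℝ := ((1 - δ) ^ n)⁻¹ with hB
  have hBpos : 0 < (1 - δ) ^ n := pow_pos h1δ n
  have hPinvle : ∀ k ω, (P k ω)⁻¹ ≤ B := by
    intro k ω
    rw [hB]
    exact inv_anti₀ hBpos (hPlowB k ω)
  have hPSM : ∀ k, StronglyMeasurable[G k] (P k) := by
    intro k
    have h1 : Measurable[G k] (M (min k n)) :=
      ((hSM (min k n) (min_le_right k n)).mono (hGmono (min_le_left k n))).measurable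
    exact (h1.max measurable_const).stronglyMeasurable
  have hPint : ∀ k, Integrable (P k) μ := by
    intro k
    have he : P k = fun ω =>
        max (M (min k n) ω - (1 - δ) ^ (min k n)) 0 + (1 - δ) ^ (min k n) := by
      funext ω
      simp only [hPdef]
      rw [← max_add_add_right]
      simp
    rw [he]
    exact (((hMint _ (min_le_right k n)).sub (integrable_const _)).pos_part).add
      (integrable_const _)
  have hPinvSM : ∀ k, StronglyMeasurable[G k] (fun ω => (P k ω)⁻¹) := fun k =>
    ((hPSM k).measurable.inv).stronglyMeasurable
  have hPinvint : ∀ k, Integrable (fun ω => (P k ω)⁻¹) μ := by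
    intro k
    refine Integrable.mono' (integrable_const B)
      (((hPinvSM k).mono (hGle k)).aestronglyMeasurable) ?_
    refine Filter.Eventually.of_forall fun ω => ?_
    rw [Real.norm_eq_abs, abs_of_nonneg (inv_nonneg.mpr (hPpos k ω).le)]
    exact hPinvle k ω
  have hcondP : ∀ k, k < n → μ[P (k + 1)|G k] =ᵐ[μ] P k := by
    intro k hk
    calc μ[P (k + 1)|G k] =ᵐ[μ] μ[M (k + 1)|G k] := condExp_congr_ae (hPM (k + 1) hk)
      _ =ᵐ[μ] M k := hmart k hk
      _ =ᵐ[μ] P k := (hPM k hk.le).symm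
  set ℱ : Filtration ℕ m0 := ⟨G, hGmono, hGle⟩ with hℱ
  -- P is a submartingale
  have hsubP : Submartingale P ℱ μ := by
    refine submartingale_nat (fun i => hPSM i) hPint fun k => ?_
    by_cases hk : k < n
    · exact ((hcondP k hk).symm).le
    · have hmin : min (k + 1) n = min k n := by omega
      have hPeq : P (k + 1) = P k := by
        funext ω
        simp only [hPdef, hmin]
      rw [hPeq, condExp_of_stronglyMeasurable (hGle k) (hPSM k) (hPint k)]
  -- measurability/integrability of the square of the inverse
  have hsqSM : ∀ k, StronglyMeasurable[G k] (fun ω => (P k ω)⁻¹ ^ 2) := fun k =>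
    (((hPSM k).measurable.inv).pow_const 2).stronglyMeasurable
  have hsqbd : ∀ k, ∀ᵐ ω ∂μ, ‖(P k ω)⁻¹ ^ 2‖ ≤ B ^ 2 := by
    intro k
    refine Filter.Eventually.of_forall fun ω => ?_
    rw [Real.norm_eq_abs, abs_of_nonneg (by positivity)]
    exact pow_le_pow_left₀ (inv_nonneg.mpr (hPpos k ω).le) (hPinvle k ω) 2
  have hprodint : ∀ k, Integrable (fun ω => (P k ω)⁻¹ ^ 2 * P (k + 1) ω) μ := by
    intro k
    refine Integrable.bdd_mul (c := B ^ 2) (hPint (k + 1))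
      (((hsqSM k).mono (hGle k)).aestronglyMeasurable) (Filter.Eventually.of_forall fun ω => ?_)
    rw [Real.norm_eq_abs, abs_of_nonneg (by positivity)]
    exact pow_le_pow_left₀ (inv_nonneg.mpr (hPpos k ω).le) (hPinvle k ω) 2
  -- key conditional expectation computation
  have hmul : ∀ k, k < n → μ[(fun ω => (P k ω)⁻¹ ^ 2 * P (k + 1) ω)|G k]
      =ᵐ[μ] fun ω => (P k ω)⁻¹ := by
    intro k hk
    have h1 : μ[(fun ω => (P k ω)⁻¹ ^ 2 * P (k + 1) ω)|G k]
        =ᵐ[μ] (fun ω => (P k ω)⁻¹ ^ 2) * μ[P (k + 1)|G k] :=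
      condExp_stronglyMeasurable_mul_of_bound (hGle k) (hsqSM k) (hPint (k + 1))
        (B ^ 2) (hsqbd k)
    refine h1.trans ?_
    filter_upwards [hcondP k hk] with ω hω
    have hne : P k ω ≠ 0 := (hPpos k ω).ne'
    simp only [Pi.mul_apply]
    rw [hω]
    field_simp
  -- the inverse process is a submartingale
  have hsubPinv : Submartingale (fun k ω => (P k ω)⁻¹) ℱ μ := by
    refine submartingale_nat (fun i => hPinvSM i) hPinvint fun k => ?_
    by_cases hk : k < n
    · have htan : (fun ω => 2 * (P k ω)⁻¹ - (P k ω)⁻¹ ^ 2 * P (k + 1) ω)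
          ≤ᵐ[μ] fun ω => (P (k + 1) ω)⁻¹ :=
        Filter.Eventually.of_forall fun ω =>
          aux_tangent_inv (hPpos k ω) (hPpos (k + 1) ω)
      have hint1 : Integrable (fun ω => 2 * (P k ω)⁻¹ - (P k ω)⁻¹ ^ 2 * P (k + 1) ω) μ :=
        ((hPinvint k).const_mul 2).sub (hprodint k)
      have hmono := condExp_mono (m := G k) hint1 (hPinvint (k + 1)) htan
      have heq : μ[(fun ω => 2 * (P k ω)⁻¹ - (P k ω)⁻¹ ^ 2 * P (k + 1) ω)|G k]
          =ᵐ[μ] fun ω => (P k ω)⁻¹ := by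
        have hsplit : (fun ω => 2 * (P k ω)⁻¹ - (P k ω)⁻¹ ^ 2 * P (k + 1) ω)
            = (fun ω => 2 * (P k ω)⁻¹) - fun ω => (P k ω)⁻¹ ^ 2 * P (k + 1) ω := rfl
        rw [hsplit]
        refine (condExp_sub ((hPinvint k).const_mul 2) (hprodint k) (G k)).trans ?_
        have h2 : μ[(fun ω => 2 * (P k ω)⁻¹)|G k] = fun ω => 2 * (P k ω)⁻¹ :=
          condExp_of_stronglyMeasurable (hGle k)
            ((((hPSM k).measurable.inv).const_mul 2).stronglyMeasurable)
            ((hPinvint k).const_mul 2)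
        rw [h2]
        filter_upwards [hmul k hk] with ω hω
        simp only [Pi.sub_apply]
        rw [hω]
        ring
      exact heq.symm.le.trans hmono
    · have hmin : min (k + 1) n = min k n := by omega
      have hPeq : (fun ω => (P (k + 1) ω)⁻¹) = fun ω => (P k ω)⁻¹ := by
        funext ω
        simp only [hPdef, hmin]
      rw [hPeq, condExp_of_stronglyMeasurable (hGle k) (hPinvSM k) (hPinvint k)]
  -- P has constant integral 1
  have hP0 : P 0 =ᵐ[μ] fun _ => (1 : ℝ) := by
    filter_upwards [hM0] with ω h0
    simp only [hPdef]
    simp [h0]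
  have hintP : ∀ k, k ≤ n → ∫ ω, P k ω ∂μ = 1 := by
    intro k
    induction k with
    | zero =>
      intro _
      rw [integral_congr_ae hP0]
      simp
    | succ k ih =>
      intro hk
      have hk' : k < n := hk
      have h1 : ∫ ω, P (k + 1) ω ∂μ = ∫ ω, (μ[P (k + 1)|G k]) ω ∂μ :=
        (integral_condExp (hGle k)).symm
      rw [h1, integral_congr_ae (hcondP k hk')]
      exact ih hk'.le
  -- pull-out identity for the product
  have hpull : ∀ k, k < n →
      ∫ ω, (P k ω)⁻¹ ^ 2 * P (k + 1) ω ∂μ = ∫ ω, (P k ω)⁻¹ ∂μ := by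
    intro k hk
    have h1 : ∫ ω, (P k ω)⁻¹ ^ 2 * P (k + 1) ω ∂μ
        = ∫ ω, (μ[(fun ω => (P k ω)⁻¹ ^ 2 * P (k + 1) ω)|G k]) ω ∂μ :=
      (integral_condExp (hGle k)).symm
    rw [h1]
    exact integral_congr_ae (hmul k hk)
  set e : ℝ := δ ^ 2 / (1 - δ) with he
  have he0 : (0:ℝ) ≤ e := by positivity
  -- recursion for the integral of the inverse
  have hrec : ∀ k, k < n →
      ∫ ω, (P (k + 1) ω)⁻¹ ∂μ ≤ (1 + e) * ∫ ω, (P k ω)⁻¹ ∂μ := by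
    intro k hk
    have haeS : (fun ω => (P (k + 1) ω)⁻¹)
        ≤ᵐ[μ] fun ω => (2 + e) * (P k ω)⁻¹ - (P k ω)⁻¹ ^ 2 * P (k + 1) ω := by
      filter_upwards [hGood] with ω hG
      have hPk : P k ω = M k ω := hPeqGood ω hG k hk.le
      have hPk1 : P (k + 1) ω = M (k + 1) ω := hPeqGood ω hG (k + 1) hk
      rw [hPk, hPk1, he]
      exact aux_step_inv hδ0 hδ1 (hG.2.1 k hk.le) (hG.2.2 k hk)
    have hint2 : Integrable
        (fun ω => (2 + e) * (P k ω)⁻¹ - (P k ω)⁻¹ ^ 2 * P (k + 1) ω) μ :=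
      ((hPinvint k).const_mul (2 + e)).sub (hprodint k)
    have h3 := integral_mono_ae (hPinvint (k + 1)) hint2 haeS
    rw [integral_sub ((hPinvint k).const_mul (2 + e)) (hprodint k),
      integral_const_mul, hpull k hk] at h3
    linarith
  -- integral bound for the inverse at time n
  have hKn : ∫ ω, (P n ω)⁻¹ ∂μ ≤ K₀ := by
    have hiter : ∀ k, k ≤ n → ∫ ω, (P k ω)⁻¹ ∂μ ≤ (1 + e) ^ k := by
      intro k
      induction k with
      | zero =>
        intro _
        have : (fun ω => (P 0 ω)⁻¹) =ᵐ[μ] fun _ => (1:ℝ) := by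
          filter_upwards [hP0] with ω h0
          rw [h0]
          norm_num
        rw [integral_congr_ae this]
        simp
      | succ k ih =>
        intro hk
        have hk' : k < n := hk
        refine (hrec k hk').trans ?_
        have := ih hk'.le
        have h1e : (0:ℝ) ≤ 1 + e := by linarith
        calc (1 + e) * ∫ ω, (P k ω)⁻¹ ∂μ ≤ (1 + e) * (1 + e) ^ k :=
              mul_le_mul_of_nonneg_left this h1e
          _ = (1 + e) ^ (k + 1) := by ring
    refine (hiter n le_rfl).trans ?_
    have h1 : (1 + e) ^ n ≤ Real.exp e ^ n :=
      pow_le_pow_left₀ (by linarith) (by linarith [Real.add_one_le_exp e]) n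
    have h2 : Real.exp e ^ n = Real.exp (n * e) := (Real.exp_nat_mul e n).symm
    have h3 : (n:ℝ) * e ≤ c ^ 2 / (1 - ρ) := by
      have hd2 : δ ^ 2 = c ^ 2 / n := by
        rw [hδ, div_pow, Real.sq_sqrt hnR.le]
      have h4 : e ≤ δ ^ 2 / (1 - ρ) := by
        rw [he]
        gcongr
      calc (n:ℝ) * e ≤ (n:ℝ) * (δ ^ 2 / (1 - ρ)) :=
            mul_le_mul_of_nonneg_left h4 (by positivity)
        _ = c ^ 2 / (1 - ρ) := by
            rw [hd2]
            field_simp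
    calc (1 + e) ^ n ≤ Real.exp ((n:ℝ) * e) := by rw [← h2]; exact h1
      _ ≤ Real.exp (c ^ 2 / (1 - ρ)) := Real.exp_le_exp.mpr h3
      _ ≤ K₀ := le_max_right _ _
  -- running maxima
  set X₁ : Ω → ℝ := fun ω =>
    (Finset.range (n + 1)).sup' Finset.nonempty_range_add_one fun k => P k ω with hX₁
  set X₂ : Ω → ℝ := fun ω =>
    (Finset.range (n + 1)).sup' Finset.nonempty_range_add_one fun k => (P k ω)⁻¹ with hX₂
  have hX₁meas : Measurable X₁ :=
    Finset.measurable_range_sup'' fun k _ => ((hPSM k).measurable).le (hGle k)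
  have hX₂meas : Measurable X₂ :=
    Finset.measurable_range_sup'' fun k _ => ((hPinvSM k).measurable).le (hGle k)
  -- Doob tail bounds
  have hpos1 : (0 : ℕ → Ω → ℝ) ≤ P :=
    Pi.le_def.mpr fun k => Pi.le_def.mpr fun ω => (hPpos k ω).le
  have hpos2 : (0 : ℕ → Ω → ℝ) ≤ fun k ω => (P k ω)⁻¹ :=
    Pi.le_def.mpr fun k => Pi.le_def.mpr fun ω => (inv_nonneg.mpr (hPpos k ω).le)
  have hT1 : ∀ t : ℝ, 0 < t → μ {ω | t ≤ X₁ ω} ≤ ENNReal.ofReal ((1:ℝ) / t) :=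
    fun t ht => aux_doob_tail hsubP hpos1 n (le_of_eq (hintP n le_rfl)) ht
  have hT2 : ∀ t : ℝ, 0 < t → μ {ω | t ≤ X₂ ω} ≤ ENNReal.ofReal (K₀ / t) :=
    fun t ht => aux_doob_tail hsubPinv hpos2 n hKn ht
  have hL1 := aux_tail_lintegral μ hX₁meas.aemeasurable le_rfl hT1
  have hL2 := aux_tail_lintegral μ hX₂meas.aemeasurable hK₀1 hT2
  -- pointwise a.e. bound on the quantity of interest
  have hptw : ∀ᵐ ω ∂μ, ENNReal.ofReal
      (((Finset.range (n + 1)).sup' Finset.nonempty_range_add_one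
        fun k => |Real.log (M k ω)|) ^ (2 * m))
      ≤ ENNReal.ofReal (A * (Real.sqrt (X₁ ω) + Real.sqrt (X₂ ω))) := by
    filter_upwards [hGood] with ω hG
    apply ENNReal.ofReal_le_ofReal
    obtain ⟨j, hjmem, hjeq⟩ := Finset.exists_mem_eq_sup'
      (Finset.nonempty_range_add_one (n := n)) (fun k => |Real.log (M k ω)|)
    rw [hjeq]
    have hjn : j ≤ n := Nat.lt_succ_iff.mp (Finset.mem_range.mp hjmem)
    have hMj : 0 < M j ω := hG.2.1 j hjn
    refine (aux_abs_log_pow_le m hMj).trans ?_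
    rw [← hA]
    have hPj : P j ω = M j ω := hPeqGood ω hG j hjn
    have h1 : Real.sqrt (M j ω) ≤ Real.sqrt (X₁ ω) := by
      apply Real.sqrt_le_sqrt
      rw [← hPj]
      exact Finset.le_sup' (fun k => P k ω) hjmem
    have h2 : Real.sqrt ((M j ω)⁻¹) ≤ Real.sqrt (X₂ ω) := by
      apply Real.sqrt_le_sqrt
      rw [← hPj]
      exact Finset.le_sup' (fun k => (P k ω)⁻¹) hjmem
    exact mul_le_mul_of_nonneg_left (add_le_add h1 h2) hA0
  -- final chain
  calc ∫⁻ ω, ENNReal.ofReal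
        (((Finset.range (n + 1)).sup' Finset.nonempty_range_add_one
          fun k => |Real.log (M k ω)|) ^ (2 * m)) ∂μ
      ≤ ∫⁻ ω, ENNReal.ofReal (A * (Real.sqrt (X₁ ω) + Real.sqrt (X₂ ω))) ∂μ :=
        lintegral_mono_ae hptw
    _ = ∫⁻ ω, ENNReal.ofReal A
          * ENNReal.ofReal (Real.sqrt (X₁ ω) + Real.sqrt (X₂ ω)) ∂μ := by
        simp_rw [ENNReal.ofReal_mul hA0]
    _ = ENNReal.ofReal A
          * ∫⁻ ω, ENNReal.ofReal (Real.sqrt (X₁ ω) + Real.sqrt (X₂ ω)) ∂μ :=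
        lintegral_const_mul' _ _ ENNReal.ofReal_ne_top
    _ = ENNReal.ofReal A * (∫⁻ ω, ENNReal.ofReal (Real.sqrt (X₁ ω)) ∂μ
          + ∫⁻ ω, ENNReal.ofReal (Real.sqrt (X₂ ω)) ∂μ) := by
        congr 1
        have : ∀ ω, ENNReal.ofReal (Real.sqrt (X₁ ω) + Real.sqrt (X₂ ω))
            = ENNReal.ofReal (Real.sqrt (X₁ ω)) + ENNReal.ofReal (Real.sqrt (X₂ ω)) :=
          fun ω => ENNReal.ofReal_add (Real.sqrt_nonneg _) (Real.sqrt_nonneg _)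
        simp_rw [this]
        exact lintegral_add_left
          ((Real.continuous_sqrt.measurable.comp hX₁meas).ennreal_ofReal) _
    _ ≤ ENNReal.ofReal A * (ENNReal.ofReal (2 * Real.sqrt 1)
          + ENNReal.ofReal (2 * Real.sqrt K₀)) :=
        mul_le_mul_right (add_le_add hL1 hL2) _
    _ ≤ ENNReal.ofReal (A * (2 + 2 * Real.sqrt K₀)) := by
        rw [← ENNReal.ofReal_add (by positivity) (by positivity),
          ← ENNReal.ofReal_mul hA0]
        apply ENNReal.ofReal_le_ofReal
        rw [Real.sqrt_one]
        apply mul_le_mul_of_nonneg_left _ hA0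
        norm_num
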